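/- arXiv:2201.00354 — 5 statements merged into one kernel-verified Lean document; each statement's English description precedes it below -/
import Mathlib

section
/- Let A ⊆ Fin L with |A| = M be such that Y is conditionally independent of X_{Aᶜ} given X_A, let λ ≥ 0 and M ≤ N ≤ L. Then every set F ⊆ Fin L with A ⊆ F and |F| = N satisfies L_N(F; x) = 0 for every x with P(X = x) > 0, and consequently F minimizes L_N(·; x) over all subsets of Fin L (since L_N(F'; x) ≥ 0 for every F'). -/
open scoped Classical
open Finset

/-- Probability of an event under a (finite) probability mass `P`. -/
noncomputable def pr {Ω : Type*} [Fintype Ω] (P : Ω → ℝ) (E : Ω → Prop) : ℝ :=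
  ∑ ω, if E ω then P ω else 0

/-- Conditional probability `P(E | C)`. -/
noncomputable def condPr {Ω : Type*} [Fintype Ω] (P : Ω → ℝ) (E C : Ω → Prop) : ℝ :=
  pr P (fun ω => E ω ∧ C ω) / pr P C

/-- The event `{X_F = x_F}`, i.e. `X ω` agrees with `x` on the index set `F`. -/
def evSel {Ω V : Type*} {L : ℕ} (X : Ω → Fin L → V) (F : Finset (Fin L))
    (x : Fin L → V) : Ω → Prop :=
  fun ω => ∀ i ∈ F, X ω i = x i

/-- Kullback–Leibler divergence between two pmfs on a finite type. -/
noncomputable def klDiv {𝒴 : Type*} [Fintype 𝒴] (p q : 𝒴 → ℝ) : ℝ :=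
  ∑ y, p y * Real.log (p y / q y)

/-- The conditional distribution `P(Y = · | C)`. -/
noncomputable def condDist {Ω 𝒴 : Type*} [Fintype Ω] (P : Ω → ℝ) (Y : Ω → 𝒴)
    (C : Ω → Prop) : 𝒴 → ℝ :=
  fun y => condPr P (fun ω => Y ω = y) C

/-- Per-instance INVASE objective
`L_N(F; x) = KL(P(Y = · | X = x) ‖ P(Y = · | X_F = x_F)) + λ·| |F| − N |`. -/
noncomputable def invaseObj {Ω V 𝒴 : Type*} [Fintype Ω] [Fintype 𝒴] {L : ℕ}
    (P : Ω → ℝ) (X : Ω → Fin L → V) (Y : Ω → 𝒴) (lam : ℝ) (N : ℕ)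
    (F : Finset (Fin L)) (x : Fin L → V) : ℝ :=
  klDiv (condDist P Y (fun ω => X ω = x)) (condDist P Y (evSel X F x))
    + lam * |(F.card : ℝ) - (N : ℝ)|

section aux

variable {Ω : Type*} [Fintype Ω] (P : Ω → ℝ)

lemma pr_nonneg (hP : ∀ ω, 0 ≤ P ω) (E : Ω → Prop) : 0 ≤ pr P E :=
  Finset.sum_nonneg fun ω _ => by by_cases h : E ω <;> simp [h, hP ω]

lemma pr_congr {E E' : Ω → Prop} (h : ∀ ω, E ω ↔ E' ω) : pr P E = pr P E' := by
  unfold pr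
  exact Finset.sum_congr rfl fun ω _ => if_congr (h ω) rfl rfl

lemma pr_mono (hP : ∀ ω, 0 ≤ P ω) {E E' : Ω → Prop} (h : ∀ ω, E ω → E' ω) :
    pr P E ≤ pr P E' := by
  unfold pr
  apply Finset.sum_le_sum
  intro ω _
  by_cases hE : E ω
  · rw [if_pos hE, if_pos (h ω hE)]
  · rw [if_neg hE]
    by_cases hE' : E' ω <;> simp [hE', hP ω]

lemma pr_decomp {V : Type*} [Fintype V] {L : ℕ} (X : Ω → Fin L → V)
    (Q : Ω → Prop) (G : Finset (Fin L)) (x : Fin L → V) :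
    pr P (fun ω => Q ω ∧ evSel X G x ω)
      = ∑ x' ∈ Finset.univ.filter (fun x' : Fin L → V => ∀ i ∈ G, x' i = x i),
          pr P (fun ω => Q ω ∧ X ω = x') := by
  unfold pr
  rw [Finset.sum_comm]
  apply Finset.sum_congr rfl
  intro ω _
  by_cases hQ : Q ω
  · by_cases hE : evSel X G x ω
    · rw [if_pos ⟨hQ, hE⟩, Finset.sum_eq_single (X ω)]
      · simp [hQ]
      · intro x' _ hne
        exact if_neg (by rintro ⟨_, h⟩; exact hne h.symm)
      · intro h
        exact absurd (Finset.mem_filter.2 ⟨Finset.mem_univ (X ω), fun i hi => hE i hi⟩) h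
    · rw [if_neg (by rintro ⟨_, h⟩; exact hE h)]
      refine (Finset.sum_eq_zero fun x' hx' => ?_).symm
      refine if_neg ?_
      rintro ⟨-, rfl⟩
      exact hE fun i hi => (Finset.mem_filter.1 hx').2 i hi
  · rw [if_neg (by rintro ⟨h, -⟩; exact hQ h)]
    refine (Finset.sum_eq_zero fun x' hx' => ?_).symm
    exact if_neg (by rintro ⟨h, -⟩; exact hQ h)

lemma sum_pr_inter {𝒴 : Type*} [Fintype 𝒴] (Y : Ω → 𝒴) (C : Ω → Prop) :
    ∑ y, pr P (fun ω => Y ω = y ∧ C ω) = pr P C := by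
  unfold pr
  rw [Finset.sum_comm]
  apply Finset.sum_congr rfl
  intro ω _
  by_cases hC : C ω <;> simp [hC]

lemma sum_condDist {𝒴 : Type*} [Fintype 𝒴] (Y : Ω → 𝒴) (C : Ω → Prop)
    (hC : pr P C ≠ 0) : ∑ y, condDist P Y C y = 1 := by
  unfold condDist condPr
  rw [← Finset.sum_div, sum_pr_inter, div_self hC]

lemma klDiv_eq_zero_of_eq {𝒴 : Type*} [Fintype 𝒴] {p q : 𝒴 → ℝ} (h : ∀ y, p y = q y) :
    klDiv p q = 0 := by
  unfold klDiv
  apply Finset.sum_eq_zero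
  intro y _
  rcases eq_or_ne (p y) 0 with h0 | h0
  · rw [h0, zero_mul]
  · rw [← h y, div_self h0, Real.log_one, mul_zero]

lemma klDiv_nonneg' {𝒴 : Type*} [Fintype 𝒴] {p q : 𝒴 → ℝ} (hp : ∀ y, 0 ≤ p y)
    (hq : ∀ y, 0 ≤ q y) (habs : ∀ y, q y = 0 → p y = 0)
    (hsum : ∑ y, q y ≤ ∑ y, p y) : 0 ≤ klDiv p q := by
  have key : ∀ y, p y - q y ≤ p y * Real.log (p y / q y) := by
    intro y
    rcases eq_or_lt_of_le (hp y) with h0 | h0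
    · rw [← h0, zero_mul]
      linarith [hq y]
    · have hq0 : 0 < q y := lt_of_le_of_ne (hq y) fun h => by
        have := habs y h.symm
        linarith
      have hlog := Real.log_le_sub_one_of_pos (div_pos hq0 h0)
      have hlog2 : Real.log (p y / q y) = - Real.log (q y / p y) := by
        rw [← Real.log_inv, inv_div]
      have hpq : p y * (q y / p y) = q y := by field_simp
      nlinarith
  calc (0 : ℝ) = ∑ y, q y - ∑ y, q y := by ring
    _ ≤ ∑ y, p y - ∑ y, q y := by linarith
    _ = ∑ y, (p y - q y) := by rw [Finset.sum_sub_distrib]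
    _ ≤ ∑ y, p y * Real.log (p y / q y) := Finset.sum_le_sum fun y _ => key y
    _ = klDiv p q := rfl

end aux

/-- Any `F ⊇ A` with `|F| = N` achieves value `0` of the per-instance INVASE objective
`L_N(·; x)` at every `x` with `P(X = x) > 0`, hence minimizes it over all subsets. -/
theorem stmt1 {Ω V 𝒴 : Type*} [Fintype Ω] [Fintype V] [Fintype 𝒴] {L M N : ℕ}
    (X : Ω → Fin L → V) (Y : Ω → 𝒴) (P : Ω → ℝ)
    (hP : ∀ ω, 0 ≤ P ω) (hPsum : ∑ ω, P ω = 1)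
    (A : Finset (Fin L)) (hAcard : A.card = M)
    (hCI : ∀ (x : Fin L → V) (y : 𝒴), 0 < pr P (evSel X A x) →
      pr P (fun ω => Y ω = y ∧ X ω = x) * pr P (evSel X A x)
        = pr P (fun ω => Y ω = y ∧ evSel X A x ω) * pr P (fun ω => X ω = x))
    (lam : ℝ) (hlam : 0 ≤ lam) (hMN : M ≤ N) (hNL : N ≤ L)
    (F : Finset (Fin L)) (hAF : A ⊆ F) (hFcard : F.card = N)

    (x : Fin L → V) (hx : 0 < pr P (fun ω => X ω = x)) :
    invaseObj P X Y lam N F x = 0 ∧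
      ∀ F' : Finset (Fin L), invaseObj P X Y lam N F x ≤ invaseObj P X Y lam N F' x := by
  have hXsub : ∀ (G : Finset (Fin L)) (ω : Ω), X ω = x → evSel X G x ω :=
    fun G ω h i _ => by rw [h]
  have hprG : ∀ G : Finset (Fin L), 0 < pr P (evSel X G x) :=
    fun G => lt_of_lt_of_le hx (pr_mono P hP fun ω h => hXsub G ω h)
  have hA0 : 0 < pr P (evSel X A x) := hprG A
  set c : 𝒴 → ℝ := fun y => pr P (fun ω => Y ω = y ∧ evSel X A x ω) / pr P (evSel X A x)
    with hc
  have hkey : ∀ (G : Finset (Fin L)), A ⊆ G → ∀ y : 𝒴,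
      pr P (fun ω => Y ω = y ∧ evSel X G x ω) * pr P (evSel X A x)
        = pr P (fun ω => Y ω = y ∧ evSel X A x ω) * pr P (evSel X G x) := by
    intro G hAG y
    have hdec2 : pr P (evSel X G x)
        = ∑ x' ∈ Finset.univ.filter (fun x' : Fin L → V => ∀ i ∈ G, x' i = x i),
            pr P (fun ω => X ω = x') := by
      rw [pr_congr P (show ∀ ω, evSel X G x ω ↔ (True ∧ evSel X G x ω) from
        fun ω => ⟨fun h => ⟨trivial, h⟩, fun h => h.2⟩), pr_decomp P X (fun _ => True) G x]
      exact Finset.sum_congr rfl fun x' _ => pr_congr P fun ω => ⟨fun h => h.2, fun h => ⟨trivial, h⟩⟩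
    rw [pr_decomp P X (fun ω => Y ω = y) G x, hdec2, Finset.sum_mul, Finset.mul_sum]
    apply Finset.sum_congr rfl
    intro x' hx'
    have hx'G : ∀ i ∈ G, x' i = x i := (Finset.mem_filter.1 hx').2
    have hAeq : ∀ ω, evSel X A x' ω ↔ evSel X A x ω := fun ω =>
      forall₂_congr fun i hi => by rw [hx'G i (hAG hi)]
    have hCIx' := hCI x' y (by rw [pr_congr P hAeq]; exact hA0)
    rw [pr_congr P hAeq,
      pr_congr P (show ∀ ω, (Y ω = y ∧ evSel X A x' ω) ↔ (Y ω = y ∧ evSel X A x ω) from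
        fun ω => and_congr_right fun _ => hAeq ω)] at hCIx'
    exact hCIx'
  have hcond : ∀ (G : Finset (Fin L)), A ⊆ G → ∀ y : 𝒴,
      condDist P Y (evSel X G x) y = c y := by
    intro G hAG y
    have h := hkey G hAG y
    show pr P (fun ω => Y ω = y ∧ evSel X G x ω) / pr P (evSel X G x) = _
    rw [hc, div_eq_div_iff (hprG G).ne' hA0.ne']
    linarith
  have huniv : ∀ ω, (X ω = x) ↔ evSel X Finset.univ x ω := fun ω =>
    ⟨fun h i _ => by rw [h], fun h => funext fun i => h i (Finset.mem_univ i)⟩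
  have hp_eq : ∀ y : 𝒴, condDist P Y (fun ω => X ω = x) y = c y := by
    intro y
    have h : condDist P Y (fun ω => X ω = x) y
        = condDist P Y (evSel X Finset.univ x) y := by
      unfold condDist condPr
      rw [pr_congr P huniv,
        pr_congr P (show ∀ ω, (Y ω = y ∧ X ω = x) ↔ (Y ω = y ∧ evSel X Finset.univ x ω)
          from fun ω => and_congr_right fun _ => huniv ω)]
    rw [h, hcond Finset.univ (Finset.subset_univ A) y]
  have hFzero : invaseObj P X Y lam N F x = 0 := by
    unfold invaseObj
    rw [klDiv_eq_zero_of_eq (fun y => by rw [hp_eq y, hcond F hAF y]), hFcard]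
    simp
  refine ⟨hFzero, fun F' => ?_⟩
  rw [hFzero]
  unfold invaseObj
  have h1 : 0 ≤ klDiv (condDist P Y (fun ω => X ω = x)) (condDist P Y (evSel X F' x)) := by
    apply klDiv_nonneg'
    · intro y; exact div_nonneg (pr_nonneg P hP _) (pr_nonneg P hP _)
    · intro y; exact div_nonneg (pr_nonneg P hP _) (pr_nonneg P hP _)
    · intro y hy
      have hF' := hprG F'
      unfold condDist condPr at hy ⊢
      have hnum : pr P (fun ω => Y ω = y ∧ evSel X F' x ω) = 0 := by
        rcases div_eq_zero_iff.1 hy with h | h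
        · exact h
        · exact absurd h hF'.ne'
      have hle : pr P (fun ω => Y ω = y ∧ X ω = x) ≤ 0 := by
        rw [← hnum]
        exact pr_mono P hP fun ω h => ⟨h.1, hXsub F' ω h.2⟩
      rw [le_antisymm hle (pr_nonneg P hP _), zero_div]
    · rw [sum_condDist P Y _ (hprG F').ne', sum_condDist P Y _ hx.ne']
  exact add_nonneg h1 (mul_nonneg hlam (abs_nonneg _))
end

section
/- Suppose r(s, mask(g₁(s), a)) = r(s, a) and T(s, mask(g₂(s), a)) = T(s, a) for all s ∈ S and a : Fin d → ℝ, and let g be the pointwise OR of g₁ and g₂. Then for every deterministic stationary policy π : S → A, the masked policy π^{(g)} defined by π^{(g)}(s) = mask(g(s), π(s)) generates the same trajectory of states as π from every initial state and satisfies V^{π^{(g)}}(s) = V^π(s) for every s ∈ S. -/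
/-- Trajectory of a deterministic MDP under policy `π` from initial state `s`:
`s₀ = s`, `s_{t+1} = T (s_t, π s_t)`. -/
def traj {S A : Type*} (T : S × A → S) (π : S → A) (s : S) : ℕ → S
  | 0 => s
  | t + 1 => T (traj T π s t, π (traj T π s t))

/-- Value function `V^π(s) = ∑_{t=0}^∞ γ^t · r(s_t, π s_t)`. -/
noncomputable def Vpi {S A : Type*} (T : S × A → S) (r : S × A → ℝ) (γ : ℝ)
    (π : S → A) (s : S) : ℝ :=
  ∑' t : ℕ, γ ^ t * r (traj T π s t, π (traj T π s t))

/-- Masked action: `mask(m, a)(i) = a i` if `m i = true`, else `0`. -/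
def maskAct {d : ℕ} (m : Fin d → Bool) (a : Fin d → ℝ) : Fin d → ℝ :=
  fun i => if m i then a i else 0

/-- If `r` depends only on the actions selected by `g₁` and `T` only on those selected
by `g₂`, and `g` is their pointwise OR, then the masked policy `π^{(g)}` generates the
same state trajectory as `π` from every initial state and has the same value. -/
theorem stmt7 {S : Type*} {d : ℕ}
    (T : S × (Fin d → ℝ) → S) (r : S × (Fin d → ℝ) → ℝ) (γ : ℝ)
    (hγ0 : 0 < γ) (hγ1 : γ < 1)
    (g₁ g₂ g : S → Fin d → Bool)
    (hg : ∀ (s : S) (i : Fin d), g s i = (g₁ s i || g₂ s i))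
    (hr : ∀ (s : S) (a : Fin d → ℝ), r (s, maskAct (g₁ s) a) = r (s, a))
    (hT : ∀ (s : S) (a : Fin d → ℝ), T (s, maskAct (g₂ s) a) = T (s, a))
    (π : S → Fin d → ℝ) :
    (∀ (s : S) (t : ℕ),
        traj T (fun s' => maskAct (g s') (π s')) s t = traj T π s t) ∧
      ∀ s : S, Vpi T r γ (fun s' => maskAct (g s') (π s')) s = Vpi T r γ π s := by

  have hmm : ∀ (m₁ m₂ : Fin d → Bool) (a : Fin d → ℝ),
      (∀ i, m₁ i = true → m₂ i = true) →
      maskAct m₁ (maskAct m₂ a) = maskAct m₁ a := by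
    intro m₁ m₂ a h
    funext i
    simp only [maskAct]
    by_cases h1 : m₁ i = true
    · simp [h1, h i h1]
    · simp [h1]
  have hTg : ∀ (s : S) (a : Fin d → ℝ), T (s, maskAct (g s) a) = T (s, a) := by
    intro s a
    rw [← hT s (maskAct (g s) a), hmm, hT]
    intro i h1; rw [hg]; simp [h1]
  have hrg : ∀ (s : S) (a : Fin d → ℝ), r (s, maskAct (g s) a) = r (s, a) := by
    intro s a
    rw [← hr s (maskAct (g s) a), hmm, hr]
    intro i h1; rw [hg]; simp [h1]
  have htraj : ∀ (s : S) (t : ℕ),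
      traj T (fun s' => maskAct (g s') (π s')) s t = traj T π s t := by
    intro s t
    induction t with
    | zero => rfl
    | succ t ih => simp only [traj, ih, hTg]
  refine ⟨htraj, fun s => ?_⟩
  unfold Vpi
  congr 1
  funext t
  rw [htraj, hrg]
end

section
/- Suppose r(s, mask(g₁(s), a)) = r(s, a) and T(s, mask(g₂(s), a)) = T(s, a) for all s ∈ S and a : Fin d → ℝ, and let g be the pointwise OR of g₁ and g₂. Then for every state s ∈ S, the optimal value over masked policies equals the optimal value over all policies: ⨆_{π : S → A} V^{π^{(g)}}(s) = ⨆_{π : S → A} V^π(s), where π^{(g)}(s) = mask(g(s), π(s)). -/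
/-- Under the assumptions of the masking lemma and uniformly bounded rewards, the
optimal value over masked policies equals the optimal value over all policies. -/
theorem stmt8 {S : Type*} {d : ℕ}
    (T : S × (Fin d → ℝ) → S) (r : S × (Fin d → ℝ) → ℝ) (γ : ℝ)
    (hγ0 : 0 < γ) (hγ1 : γ < 1)
    (R : ℝ) (hR : ∀ (s : S) (a : Fin d → ℝ), |r (s, a)| ≤ R)
    (g₁ g₂ g : S → Fin d → Bool)
    (hg : ∀ (s : S) (i : Fin d), g s i = (g₁ s i || g₂ s i))
    (hr : ∀ (s : S) (a : Fin d → ℝ), r (s, maskAct (g₁ s) a) = r (s, a))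
    (hT : ∀ (s : S) (a : Fin d → ℝ), T (s, maskAct (g₂ s) a) = T (s, a))
    (s : S) :
    (⨆ π : S → Fin d → ℝ, Vpi T r γ (fun s' => maskAct (g s') (π s')) s)
      = ⨆ π : S → Fin d → ℝ, Vpi T r γ π s := by
  have hr' : ∀ (s' : S) (a : Fin d → ℝ), r (s', maskAct (g s') a) = r (s', a) := by
    intro s' a
    have h1 : maskAct (g₁ s') (maskAct (g s') a) = maskAct (g₁ s') a := by
      funext i
      simp only [maskAct, hg]
      cases h : g₁ s' i <;> simp
    calc r (s', maskAct (g s') a) = r (s', maskAct (g₁ s') (maskAct (g s') a)) := (hr _ _).symm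
      _ = r (s', maskAct (g₁ s') a) := by rw [h1]
      _ = r (s', a) := hr _ _
  have hT' : ∀ (s' : S) (a : Fin d → ℝ), T (s', maskAct (g s') a) = T (s', a) := by
    intro s' a
    have h2 : maskAct (g₂ s') (maskAct (g s') a) = maskAct (g₂ s') a := by
      funext i
      simp only [maskAct, hg]
      cases h : g₂ s' i <;> simp
    calc T (s', maskAct (g s') a) = T (s', maskAct (g₂ s') (maskAct (g s') a)) := (hT _ _).symm
      _ = T (s', maskAct (g₂ s') a) := by rw [h2]
      _ = T (s', a) := hT _ _
  have hV : ∀ π : S → Fin d → ℝ, Vpi T r γ (fun s' => maskAct (g s') (π s')) s = Vpi T r γ π s := by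
    intro π
    have htraj : ∀ t, traj T (fun s' => maskAct (g s') (π s')) s t = traj T π s t := by
      intro t
      induction t with
      | zero => rfl
      | succ t ih => simp only [traj, ih, hT']
    unfold Vpi
    exact tsum_congr fun t => by rw [htraj, hr']
  exact iSup_congr hV
end

section
/- Suppose r(s, mask(g₁(s), a)) = r(s, a) and T(s, mask(g₂(s), a)) = T(s, a) for all s ∈ S and a : Fin d → ℝ, and let g be the pointwise OR of g₁ and g₂. Define the optimal state value V*(s) = ⨆_{π : S → A} V^π(s) and the state-action value Q(s, a) = r(s, a) + γ · V*(T(s, a)). Then the Q-function is invariant under masking with g: for every s ∈ S and a : Fin d → ℝ, Q(s, mask(g(s), a)) = Q(s, a). -/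
/-- Optimal state value `V*(s) = ⨆_π V^π(s)`. -/
noncomputable def Vstar {S : Type*} {d : ℕ} (T : S × (Fin d → ℝ) → S)
    (r : S × (Fin d → ℝ) → ℝ) (γ : ℝ) (s : S) : ℝ :=
  ⨆ π : S → Fin d → ℝ, Vpi T r γ π s

/-- State-action value `Q(s, a) = r(s, a) + γ · V*(T(s, a))`. -/
noncomputable def Qstar {S : Type*} {d : ℕ} (T : S × (Fin d → ℝ) → S)
    (r : S × (Fin d → ℝ) → ℝ) (γ : ℝ) (s : S) (a : Fin d → ℝ) : ℝ :=
  r (s, a) + γ * Vstar T r γ (T (s, a))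

/-- Under the assumptions of the masking lemma and uniformly bounded rewards, the
`Q`-function is invariant under masking with `g`: `Q(s, mask(g s, a)) = Q(s, a)`. -/
theorem stmt9 {S : Type*} {d : ℕ}
    (T : S × (Fin d → ℝ) → S) (r : S × (Fin d → ℝ) → ℝ) (γ : ℝ)
    (hγ0 : 0 < γ) (hγ1 : γ < 1)
    (R : ℝ) (hR : ∀ (s : S) (a : Fin d → ℝ), |r (s, a)| ≤ R)
    (g₁ g₂ g : S → Fin d → Bool)
    (hg : ∀ (s : S) (i : Fin d), g s i = (g₁ s i || g₂ s i))
    (hr : ∀ (s : S) (a : Fin d → ℝ), r (s, maskAct (g₁ s) a) = r (s, a))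
    (hT : ∀ (s : S) (a : Fin d → ℝ), T (s, maskAct (g₂ s) a) = T (s, a)) :
    ∀ (s : S) (a : Fin d → ℝ),
      Qstar T r γ s (maskAct (g s) a) = Qstar T r γ s a := by
  intro s a
  have h1 : maskAct (g₁ s) (maskAct (g s) a) = maskAct (g₁ s) a := by
    funext i
    simp only [maskAct, hg s i]
    cases h : g₁ s i <;> simp [h]
  have h2 : maskAct (g₂ s) (maskAct (g s) a) = maskAct (g₂ s) a := by
    funext i
    simp only [maskAct, hg s i]
    cases h : g₂ s i <;> simp [h]
  have hr' : r (s, maskAct (g s) a) = r (s, a) := by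
    rw [← hr s (maskAct (g s) a), h1, hr]
  have hT' : T (s, maskAct (g s) a) = T (s, a) := by
    rw [← hT s (maskAct (g s) a), h2, hT]
  simp [Qstar, hr', hT']
end

section
/- Suppose r(s, mask(g₁(s), a)) = r(s, a) and T(s, mask(g₂(s), a)) = T(s, a) for all s ∈ S and a : Fin d → ℝ, and let g be the pointwise OR of g₁ and g₂. If a policy π : S → A is optimal, i.e. V^π(s) = V*(s) := ⨆_{π' : S → A} V^{π'}(s) for every s ∈ S, then the masked policy π^{(g)}, defined by π^{(g)}(s) = mask(g(s), π(s)), is also optimal: V^{π^{(g)}}(s) = V*(s) for every s ∈ S. -/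
/-- Under the assumptions of the masking lemma and uniformly bounded rewards, if `π`
is optimal then so is the masked policy `π^{(g)}(s) = mask(g s, π s)`. -/
theorem stmt10 {S : Type*} {d : ℕ}
    (T : S × (Fin d → ℝ) → S) (r : S × (Fin d → ℝ) → ℝ) (γ : ℝ)
    (hγ0 : 0 < γ) (hγ1 : γ < 1)
    (R : ℝ) (hR : ∀ (s : S) (a : Fin d → ℝ), |r (s, a)| ≤ R)
    (g₁ g₂ g : S → Fin d → Bool)
    (hg : ∀ (s : S) (i : Fin d), g s i = (g₁ s i || g₂ s i))
    (hr : ∀ (s : S) (a : Fin d → ℝ), r (s, maskAct (g₁ s) a) = r (s, a))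
    (hT : ∀ (s : S) (a : Fin d → ℝ), T (s, maskAct (g₂ s) a) = T (s, a))
    (π : S → Fin d → ℝ)
    (hopt : ∀ s : S, Vpi T r γ π s = Vstar T r γ s) :
    ∀ s : S, Vpi T r γ (fun s' => maskAct (g s') (π s')) s = Vstar T r γ s := by
  -- mask composition lemmas
  have hm1 : ∀ (s : S) (a : Fin d → ℝ),
      maskAct (g₁ s) (maskAct (g s) a) = maskAct (g₁ s) a := by
    intro s a
    funext i
    simp only [maskAct, hg]
    cases h1 : g₁ s i <;> simp [h1]
  have hm2 : ∀ (s : S) (a : Fin d → ℝ),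
      maskAct (g₂ s) (maskAct (g s) a) = maskAct (g₂ s) a := by
    intro s a
    funext i
    simp only [maskAct, hg]
    cases h2 : g₂ s i <;> simp [h2]
  have hr' : ∀ (s : S) (a : Fin d → ℝ), r (s, maskAct (g s) a) = r (s, a) := by
    intro s a
    rw [← hr s (maskAct (g s) a), hm1, hr]
  have hT' : ∀ (s : S) (a : Fin d → ℝ), T (s, maskAct (g s) a) = T (s, a) := by
    intro s a
    rw [← hT s (maskAct (g s) a), hm2, hT]
  intro s
  have htraj : ∀ t, traj T (fun s' => maskAct (g s') (π s')) s t = traj T π s t := by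
    intro t
    induction t with
    | zero => rfl
    | succ t ih => simp only [traj, ih, hT']
  have hV : Vpi T r γ (fun s' => maskAct (g s') (π s')) s = Vpi T r γ π s := by
    unfold Vpi
    congr 1
    funext t
    rw [htraj, hr']
  rw [hV, hopt]
end
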